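/- In a type-theoretic fibration category, every acyclic cofibration is a homotopy equivalence. -/

import Mathlib

open CategoryTheory CategoryTheory.Limits

universe v u

variable {C : Type u} [Category.{v} C]

/-- An acyclic cofibration: a morphism with the left lifting property against
all fibrations. -/
def AcyclicCofib (Fib : MorphismProperty C) {A B : C} (i : A ⟶ B) : Prop :=
  ∀ {X Y : C} (p : X ⟶ Y), Fib p → HasLiftingProperty i p

/-- `f` and `g` are homotopic: there is a path object `Y → P → Y × Y`
(acyclic cofibration followed by fibration factoring the diagonal) and a
homotopy `H : X ⟶ P` whose two projections are `f` and `g`. -/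
def Homotopic [HasBinaryProducts C] (Fib : MorphismProperty C)
    {X Y : C} (f g : X ⟶ Y) : Prop :=
  ∃ (P : C) (s : Y ⟶ P) (p : P ⟶ Y ⨯ Y),
    AcyclicCofib Fib s ∧ Fib p ∧ s ≫ p = diag Y ∧
    ∃ H : X ⟶ P, H ≫ p ≫ prod.fst = f ∧ H ≫ p ≫ prod.snd = g

/-- in a type-theoretic fibration category, every acyclic
cofibration is a homotopy equivalence.  (Binary products exist in any
type-theoretic fibration category, being pullbacks of fibrations over the
terminal object; here they are assumed as an instance to express path
objects.) -/
theorem stmt13 [HasTerminal C] [HasBinaryProducts C]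
    (Fib : MorphismProperty C)
    -- fibrations contain the isomorphisms and all maps to the terminal object
    (hiso : ∀ {X Y : C} (f : X ⟶ Y) [IsIso f], Fib f)
    (hterm : ∀ X : C, Fib (terminal.from X))
    -- fibrations form a subcategory
    (hcomp : ∀ {X Y Z : C} (f : X ⟶ Y) (g : Y ⟶ Z), Fib f → Fib g → Fib (f ≫ g))
    -- pullbacks of fibrations exist and are fibrations
    (hpbex : ∀ {X Y Z : C} (f : X ⟶ Z) (g : Y ⟶ Z), Fib g → HasPullback f g)
    (hpb : ∀ {P X Y Z : C} (fst : P ⟶ X) (snd : P ⟶ Y) (f : X ⟶ Z) (g : Y ⟶ Z),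
      IsPullback fst snd f g → Fib g → Fib fst)
    -- acyclic cofibrations are stable under pullback along fibrations
    (hacpb : ∀ {P X Y Z : C} (fst : P ⟶ X) (snd : P ⟶ Y) (f : X ⟶ Z) (g : Y ⟶ Z),
      IsPullback fst snd f g → AcyclicCofib Fib f → Fib g → AcyclicCofib Fib snd)
    -- every morphism factors as an acyclic cofibration followed by a fibration
    (hfact : ∀ {X Y : C} (f : X ⟶ Y),
      ∃ (W : C) (i : X ⟶ W) (p : W ⟶ Y), AcyclicCofib Fib i ∧ Fib p ∧ i ≫ p = f)
    {A B : C} (i : A ⟶ B) (hi : AcyclicCofib Fib i) :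
    ∃ r : B ⟶ A, Homotopic Fib (i ≫ r) (𝟙 A) ∧ Homotopic Fib (r ≫ i) (𝟙 B) := by
  have hL := hi (terminal.from A) (hterm A)
  have sq : CommSq (𝟙 A) i (terminal.from A) (terminal.from B) :=
    ⟨Subsingleton.elim _ _⟩
  obtain ⟨⟨⟨r, hr, -⟩⟩⟩ := hL.sq_hasLift sq
  obtain ⟨PA, sA, pA, hsA, hpA, hfA⟩ := hfact (diag A)
  obtain ⟨PB, sB, pB, hsB, hpB, hfB⟩ := hfact (diag B)
  have sq2 : CommSq (i ≫ sB) i pB (prod.lift (r ≫ i) (𝟙 B)) := by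
    constructor
    apply Limits.prod.hom_ext <;>
      simp [Category.assoc, hfB, reassoc_of% hr, diag]
  have hL2 := hi pB hpB
  obtain ⟨⟨⟨H, -, hH⟩⟩⟩ := hL2.sq_hasLift sq2
  refine ⟨r, ⟨PA, sA, pA, hsA, hpA, hfA, sA, ?_, ?_⟩,
    ⟨PB, sB, pB, hsB, hpB, hfB, H, ?_, ?_⟩⟩
  · rw [reassoc_of% hfA, hr]; simp [diag]; exact prod.lift_fst _ _
  · rw [reassoc_of% hfA]; simp [diag]; exact prod.lift_snd _ _
  · rw [reassoc_of% hH]; exact prod.lift_fst _ _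
  · rw [reassoc_of% hH]; exact prod.lift_snd _ _
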